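/- (Locality of conjugated swap under causal evolution) Let U be a unitary on the doubled fermionic lattice system that acts only on the copy modes b_x and is causal (U b_x U† is an odd operator localized on the neighbourhood N(x)). Then for each x, U S_x U† = exp[i(π/2)(b'†_x − a†_x)(b'_x − a_x)] with b'_x = U b_x U†, and U S_x U† is localized on N(x): it commutes with a_y, a†_y, b_y, b†_y for all y ∉ N(x). -/

import Mathlib

open NormedSpace

private lemma anticomm_star {A : Type*} [NormedRing A] [StarRing A]
    {p g : A} (h : p * g + g * p = 0) :
    star p * star g + star g * star p = 0 := by
  have h' := congrArg star h
  rw [star_add, star_mul, star_mul, star_zero, add_comm] at h'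
  exact h'

private lemma anticomm_sub {A : Type*} [Ring A] {p q g : A}
    (hp : p * g + g * p = 0) (hq : q * g + g * q = 0) :
    (p - q) * g + g * (p - q) = 0 := by
  have : (p - q) * g + g * (p - q) = (p * g + g * p) - (q * g + g * q) := by
    noncomm_ring
  rw [this, hp, hq, sub_zero]

private lemma comm_of_anticomm {A : Type*} [Ring A] {p q g : A}
    (hp : p * g + g * p = 0) (hq : q * g + g * q = 0) :
    Commute (p * q) g := by
  have h1 : q * g = -(g * q) := eq_neg_of_add_eq_zero_left hq
  have h2 : p * g = -(g * p) := eq_neg_of_add_eq_zero_left hp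
  show p * q * g = g * (p * q)
  calc p * q * g = p * (q * g) := mul_assoc _ _ _
    _ = -(p * g * q) := by rw [h1, mul_neg, mul_assoc]
    _ = -(-(g * p) * q) := by rw [h2]
    _ = g * (p * q) := by rw [neg_mul, neg_neg, mul_assoc]

theorem conjugated_swap_is_local
    {ι : Type*} {A : Type*} [NormedRing A] [StarRing A] [NormedAlgebra ℂ A]
    [StarModule ℂ A] [CompleteSpace A]
    (a b : ι → A) (N : ι → Finset ι) (hNx : ∀ x, x ∈ N x)
    (ha : ∀ x y, a x * a y + a y * a x = 0)
    (haad : ∀ x y, x ≠ y → a x * star (a y) + star (a y) * a x = 0)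
    (hb : ∀ x y, b x * b y + b y * b x = 0)
    (hbbd : ∀ x y, x ≠ y → b x * star (b y) + star (b y) * b x = 0)
    (hab : ∀ x y, a x * b y + b y * a x = 0)
    (habd : ∀ x y, a x * star (b y) + star (b y) * a x = 0)
    (U : A) (hUunit : U * star U = 1 ∧ star U * U = 1)
    (hUa : ∀ x, U * a x = a x * U) (hUad : ∀ x, U * star (a x) = star (a x) * U)
    (hlocal : ∀ x, ∀ y ∉ N x,
      ((U * b x * star U) * a y + a y * (U * b x * star U) = 0) ∧
      ((U * b x * star U) * star (a y) + star (a y) * (U * b x * star U) = 0) ∧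
      ((U * b x * star U) * b y + b y * (U * b x * star U) = 0) ∧
      ((U * b x * star U) * star (b y) + star (b y) * (U * b x * star U) = 0))
    (S : ι → A)
    (hS : ∀ x, S x = exp ((Complex.I * (Real.pi / 2 : ℝ)) •
      ((star (b x) - star (a x)) * (b x - a x)))) :
    ∀ x,
      U * S x * star U =
        exp ((Complex.I * (Real.pi / 2 : ℝ)) •
          ((star (U * b x * star U) - star (a x)) * ((U * b x * star U) - a x))) ∧
      ∀ y ∉ N x,
        (U * S x * star U) * a y = a y * (U * S x * star U) ∧
        (U * S x * star U) * star (a y) = star (a y) * (U * S x * star U) ∧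
        (U * S x * star U) * b y = b y * (U * S x * star U) ∧
        (U * S x * star U) * star (b y) = star (b y) * (U * S x * star U) := by
  obtain ⟨h1, h2⟩ := hUunit
  intro x
  set c : ℂ := Complex.I * (Real.pi / 2 : ℝ) with hc
  set b' : A := U * b x * star U with hb'
  have hstarb' : star b' = U * star (b x) * star U := by
    rw [hb', star_mul, star_mul, star_star, mul_assoc]
  -- conjugation of products
  have key : ∀ p q : A, (U * p * star U) * (U * q * star U) = U * (p * q) * star U := by
    intro p q
    have e : (U * p * star U) * (U * q * star U) = U * p * (star U * U) * (q * star U) := by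
      noncomm_ring
    rw [e, h2, mul_one]
    noncomm_ring
  have hsa : U * star (a x) * star U = star (a x) := by
    rw [hUad, mul_assoc, h1, mul_one]
  have haa : U * a x * star U = a x := by
    rw [hUa, mul_assoc, h1, mul_one]
  have hP : U * (star (b x) - star (a x)) * star U = star b' - star (a x) := by
    rw [mul_sub, sub_mul, hsa, ← hstarb']
  have hQ : U * (b x - a x) * star U = b' - a x := by
    rw [mul_sub, sub_mul, haa, ← hb']
  have hM : U * ((star (b x) - star (a x)) * (b x - a x)) * star U
      = (star b' - star (a x)) * (b' - a x) := by
    rw [← key, hP, hQ]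
  -- units
  set u : Aˣ := ⟨U, star U, h1, h2⟩ with hu
  have hconj : U * S x * star U
      = exp (c • ((star b' - star (a x)) * (b' - a x))) := by
    rw [hS x]
    let +nondep : NormedAlgebra ℚ A := .restrictScalars ℚ ℂ A
    have := (exp_units_conj u (c • ((star (b x) - star (a x)) * (b x - a x)))).symm
    have hcoe : (↑u : A) = U := rfl
    have hcoeinv : (↑u⁻¹ : A) = star U := rfl
    rw [hcoe, hcoeinv] at this
    rw [this, mul_smul_comm, smul_mul_assoc, hM]
  refine ⟨hconj, ?_⟩
  intro y hy
  have hyx : y ≠ x := fun h => hy (h ▸ hNx x)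
  obtain ⟨l1, l2, l3, l4⟩ := hlocal x y hy
  rw [← hb'] at l1 l2 l3 l4
  -- anticommutation of the factors with each generator
  have commgen : ∀ g : A,
      (b' * g + g * b' = 0) → (star b' * g + g * star b' = 0) →
      (a x * g + g * (a x) = 0) → (star (a x) * g + g * star (a x) = 0) →
      (U * S x * star U) * g = g * (U * S x * star U) := by
    intro g hg1 hg2 hg3 hg4
    have hPg := anticomm_sub hg2 hg4
    have hQg := anticomm_sub hg1 hg3
    have hcom : Commute (c • ((star b' - star (a x)) * (b' - a x))) g :=
      (comm_of_anticomm hPg hQg).smul_left c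
    have := (hcom.exp_left)
    rw [hconj]
    exact this
  -- helper to flip anticommutators
  have flip : ∀ p g : A, p * g + g * p = 0 → g * p + p * g = 0 := by
    intro p g h; rw [add_comm]; exact h
  have star2 : ∀ p g : A, p * star g + star g * p = 0 →
      star p * g + g * star p = 0 := by
    intro p g h
    have := anticomm_star h
    rwa [star_star] at this
  refine ⟨?_, ?_, ?_, ?_⟩
  · exact commgen (a y) l1 (star2 _ _ l2) (ha x y) (flip _ _ (haad y x hyx))
  · exact commgen (star (a y))
      l2
      (by have := anticomm_star l1; exact this)
      (haad x y (Ne.symm hyx))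
      (by have := anticomm_star (ha x y); exact this)
  · exact commgen (b y) l3 (star2 _ _ l4) (hab x y) (by have := anticomm_star (habd x y); rwa [star_star] at this)
  · exact commgen (star (b y))
      l4
      (anticomm_star l3)
      (habd x y)
      (anticomm_star (hab x y))
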